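/- Let Γ be a countable group (written additively) and let Ŷ = Y^Γ be the product of copies of the circle Y = ℝ/ℤ, with the shift action S^β(ŷ)[γ] = ŷ[γ+β]. Let •SIM be the set of shift-invariant Borel probability measures on Ŷ, with the weak-* topology. Then SIM — the set of those μ̂ ∈ •SIM whose one-dimensional marginal Marg[μ̂] (the pushforward of μ̂ under evaluation at the identity coordinate 0 ∈ Γ) is nonatomic and has full support — is a comeager subset of •SIM. -/

import Mathlib

open MeasureTheory

open Set Filter Topology ENNReal NNReal Uniformity

noncomputable section

/-- The shift action of `β : Γ` on `Ŷ = Y^Γ`: `(S^β yhat)[γ] = yhat[γ + β]`. -/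
def shiftMap {Γ : Type*} [AddGroup Γ] (β : Γ) (yhat : Γ → AddCircle (1 : ℝ)) :
    Γ → AddCircle (1 : ℝ) :=
  fun γ => yhat (γ + β)

/-- A Borel probability measure on `Ŷ = Y^Γ` is a *sim* if it is invariant under the
shift `S^β` for every `β : Γ`. -/
def IsSim {Γ : Type*} [AddGroup Γ] (μ : ProbabilityMeasure (Γ → AddCircle (1 : ℝ))) : Prop :=
  ∀ β : Γ, μ.toMeasure.map (shiftMap β) = μ.toMeasure

/-- The one-dimensional marginal of a measure on `Ŷ = Y^Γ`: its pushforward under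
evaluation at the identity coordinate `0 : Γ`. -/
def Marg {Γ : Type*} [AddGroup Γ] (μ : ProbabilityMeasure (Γ → AddCircle (1 : ℝ))) :
    Measure (AddCircle (1 : ℝ)) :=
  μ.toMeasure.map (fun yhat => yhat 0)

/-- A Borel probability measure on the circle is *good* if it is nonatomic and has
full support. -/
def IsGoodMeasure (ν : Measure (AddCircle (1 : ℝ))) : Prop :=
  (∀ y : AddCircle (1 : ℝ), ν {y} = 0) ∧
    ∀ V : Set (AddCircle (1 : ℝ)), IsOpen V → V.Nonempty → 0 < ν V



section Aux

local instance factOne : Fact ((0:ℝ) < 1) := ⟨one_pos⟩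

abbrev Yc := AddCircle (1 : ℝ)

lemma Yc.volume_singleton (y : Yc) : (volume : Measure Yc) {y} = 0 := by
  have h := le_trans (measure_mono (by simp : {y} ⊆ Metric.closedBall y 0))
    (le_of_eq (AddCircle.volume_closedBall (T := 1) 0))
  simpa using h

instance : IsProbabilityMeasure (volume : Measure Yc) := ⟨by simp⟩

/-- the uniform measure on the (image of the) interval `(0, δ]` in the circle -/
def rho (δ : ℝ) : Measure Yc :=
  Measure.map (fun x : ℝ => (x : Yc)) ((ENNReal.ofReal δ)⁻¹ • volume.restrict (Ioc 0 δ))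

lemma rho_apply {δ : ℝ} {s : Set Yc} (hs : MeasurableSet s) :
    rho δ s = (ENNReal.ofReal δ)⁻¹ * volume (((fun x : ℝ => (x : Yc)) ⁻¹' s) ∩ Ioc 0 δ) := by
  rw [rho, Measure.map_apply AddCircle.measurable_mk' hs, Measure.smul_apply,
    Measure.restrict_apply (AddCircle.measurable_mk' hs), smul_eq_mul]

lemma rho_prob (δ : ℝ) (hδ : 0 < δ) : IsProbabilityMeasure (rho δ) := by
  constructor
  rw [rho_apply MeasurableSet.univ]
  simp [Real.volume_Ioc, hδ.le, ENNReal.inv_mul_cancel, ENNReal.ofReal_ne_top,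
    (ENNReal.ofReal_pos.mpr hδ).ne']

lemma countable_mk_preimage_singleton (y : Yc) :
    Set.Countable {x : ℝ | (x : Yc) = y} := by
  obtain ⟨x₀, rfl⟩ : ∃ x₀ : ℝ, (x₀ : Yc) = y := Quotient.exists_rep y
  have : {x : ℝ | (x : Yc) = (x₀ : Yc)} ⊆ range (fun n : ℤ => x₀ + n • (1:ℝ)) := by
    intro x hx
    have hx' : (x : Yc) = (x₀ : Yc) := hx
    have h0 : ((x - x₀ : ℝ) : Yc) = 0 := by
      rw [show ((x - x₀ : ℝ) : Yc) = (x:Yc) - (x₀:Yc) from rfl, hx', sub_self]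
    obtain ⟨n, hn⟩ := (AddCircle.coe_eq_zero_iff (1:ℝ)).mp h0
    exact ⟨n, by show x₀ + n • (1:ℝ) = x; rw [hn]; ring⟩
  exact (countable_range _).mono this

lemma rho_singleton (δ : ℝ) (y : Yc) : rho δ {y} = 0 := by
  rw [rho_apply (MeasurableSet.singleton y)]
  have : volume (((fun x : ℝ => (x : Yc)) ⁻¹' {y}) ∩ Ioc 0 δ) = 0 := by
    refine measure_mono_null inter_subset_left ?_
    exact Set.Countable.measure_zero (countable_mk_preimage_singleton y) _
  rw [this, mul_zero]

/-- For small `δ`, `rho δ` is concentrated on any given neighborhood of `0`. -/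
lemma rho_ae_mem {N : Set Yc} (hN : IsOpen N) (h0 : (0 : Yc) ∈ N) :
    ∃ a > 0, ∀ δ : ℝ, 0 < δ → δ < a → ∀ᵐ t ∂(rho δ), t ∈ N := by
  have hcont : ContinuousAt (fun x : ℝ => (x : Yc)) 0 := (AddCircle.continuous_mk' 1).continuousAt
  have hmem : (fun x : ℝ => (x : Yc)) ⁻¹' N ∈ 𝓝 (0 : ℝ) := hcont (hN.mem_nhds (by simpa))
  obtain ⟨a, ha, hball⟩ := Metric.mem_nhds_iff.mp hmem
  refine ⟨a, ha, fun δ hδ hδa => ?_⟩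
  rw [ae_iff]
  have : rho δ Nᶜ = 0 := by
    rw [rho_apply (hN.measurableSet.compl)]
    have hsub : Ioc 0 δ ⊆ (fun x : ℝ => (x : Yc)) ⁻¹' N := fun x hx => by
      refine hball ?_
      simp only [Metric.mem_ball, Real.dist_eq, sub_zero]
      rw [abs_of_pos hx.1]; linarith [hx.2]
    have : ((fun x : ℝ => (x : Yc)) ⁻¹' Nᶜ) ∩ Ioc 0 δ = ∅ := by
      ext x
      simp only [mem_inter_iff, mem_preimage, mem_compl_iff, mem_empty_iff_false, iff_false,
        not_and]
      intro hxn hxI; exact hxn (hsub hxI)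
    rw [this]; simp
  exact this

section Yhat
variable {Γ : Type*} [AddGroup Γ] [Countable Γ]

def constMap : Yc → (Γ → Yc) := fun t _ => t

def addConst : (Γ → Yc) × Yc → (Γ → Yc) := fun p γ => p.1 γ + p.2

lemma continuous_constMap : Continuous (constMap (Γ := Γ)) :=
  continuous_pi fun _ => continuous_id

lemma continuous_addConst : Continuous (addConst (Γ := Γ)) :=
  continuous_pi fun γ => ((continuous_apply γ).comp continuous_fst).add continuous_snd

lemma continuous_shiftMap (β : Γ) : Continuous (shiftMap (Γ := Γ) β) :=
  continuous_pi fun γ => continuous_apply (γ + β)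

lemma measurable_ev0 : Measurable (fun yh : Γ → Yc => yh 0) := measurable_pi_apply 0

/-- the shift-invariant measure supported on constant configurations -/
def constVol : Measure (Γ → Yc) := Measure.map constMap volume

instance : IsProbabilityMeasure (constVol (Γ := Γ)) :=
  Measure.isProbabilityMeasure_map continuous_constMap.measurable.aemeasurable

/-- the smoothed/perturbed approximation to `μ` -/
def nuApprox (μ : Measure (Γ → Yc)) (n : ℕ) : Measure (Γ → Yc) :=
  (1 - ((n : ℝ≥0∞) + 2)⁻¹) • Measure.map addConst (μ.prod (rho ((n : ℝ) + 2)⁻¹))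
    + ((n : ℝ≥0∞) + 2)⁻¹ • constVol

lemma delta_pos (n : ℕ) : (0:ℝ) < ((n : ℝ) + 2)⁻¹ := by positivity

instance nuApprox_prob (μ : Measure (Γ → Yc)) [IsProbabilityMeasure μ] (n : ℕ) :
    IsProbabilityMeasure (nuApprox μ n) := by
  haveI := rho_prob _ (delta_pos n)
  constructor
  have hmap : Measure.map addConst (μ.prod (rho ((n : ℝ) + 2)⁻¹)) univ = 1 := by
    rw [Measure.map_apply continuous_addConst.measurable MeasurableSet.univ]
    simp
  have hε : ((n : ℝ≥0∞) + 2)⁻¹ ≤ 1 := by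
    exact ENNReal.inv_le_one.mpr (le_add_self.trans' one_le_two)
  simp only [nuApprox, Measure.add_apply, Measure.smul_apply, hmap, smul_eq_mul, mul_one]
  rw [measure_univ, mul_one, tsub_add_cancel_of_le hε]

lemma shiftMap_comp_addConst (β : Γ) :
    (shiftMap β) ∘ (addConst (Γ := Γ)) = addConst ∘ (Prod.map (shiftMap β) id) := rfl

lemma shiftMap_comp_constMap (β : Γ) :
    (shiftMap β) ∘ (constMap (Γ := Γ)) = constMap := rfl

lemma nuApprox_shift_invariant (μ : Measure (Γ → Yc)) [IsProbabilityMeasure μ]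
    (hμ : ∀ β : Γ, μ.map (shiftMap β) = μ) (n : ℕ) (β : Γ) :
    (nuApprox μ n).map (shiftMap β) = nuApprox μ n := by
  haveI := rho_prob _ (delta_pos n)
  have hβ : Measurable (shiftMap (Γ := Γ) β) := (continuous_shiftMap β).measurable
  rw [nuApprox, Measure.map_add _ _ hβ, Measure.map_smul, Measure.map_smul]
  congr 1
  · congr 1
    rw [Measure.map_map hβ continuous_addConst.measurable, shiftMap_comp_addConst,
      ← Measure.map_map continuous_addConst.measurable (hβ.prodMap measurable_id)]
    congr 1
    rw [← Measure.map_prod_map _ _ hβ measurable_id, hμ β, Measure.map_id]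
  · congr 1
    rw [constVol, Measure.map_map hβ continuous_constMap.measurable, shiftMap_comp_constMap]

lemma marg_nuApprox (μ : Measure (Γ → Yc)) [IsProbabilityMeasure μ] (n : ℕ) :
    (nuApprox μ n).map (fun yh : Γ → Yc => yh 0)
      = (1 - ((n : ℝ≥0∞) + 2)⁻¹) •
          Measure.map (fun p : (Γ → Yc) × Yc => p.1 0 + p.2) (μ.prod (rho ((n : ℝ) + 2)⁻¹))
        + ((n : ℝ≥0∞) + 2)⁻¹ • volume := by
  haveI := rho_prob _ (delta_pos n)
  rw [nuApprox, Measure.map_add _ _ measurable_ev0, Measure.map_smul, Measure.map_smul]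
  congr 1
  · congr 1
    rw [Measure.map_map measurable_ev0 continuous_addConst.measurable]
    rfl
  · congr 1
    rw [constVol, Measure.map_map measurable_ev0 continuous_constMap.measurable]
    have : (fun yh : Γ → Yc => yh 0) ∘ (constMap (Γ := Γ)) = id := rfl
    rw [this, Measure.map_id]

lemma marg_nuApprox_good (μ : Measure (Γ → Yc)) [IsProbabilityMeasure μ] (n : ℕ) :
    (∀ y : Yc, (nuApprox μ n).map (fun yh : Γ → Yc => yh 0) {y} = 0) ∧
      ∀ V : Set Yc, IsOpen V → V.Nonempty →
        0 < (nuApprox μ n).map (fun yh : Γ → Yc => yh 0) V := by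
  haveI := rho_prob _ (delta_pos n)
  have hg : Measurable (fun p : (Γ → Yc) × Yc => p.1 0 + p.2) :=
    (measurable_ev0.comp measurable_fst).add measurable_snd
  constructor
  · intro y
    rw [marg_nuApprox]
    have h1 : Measure.map (fun p : (Γ → Yc) × Yc => p.1 0 + p.2)
        (μ.prod (rho ((n : ℝ) + 2)⁻¹)) {y} = 0 := by
      rw [Measure.map_apply hg (MeasurableSet.singleton y),
        Measure.prod_apply (hg (MeasurableSet.singleton y))]
      have : ∀ yh : Γ → Yc, (Prod.mk yh ⁻¹' ((fun p : (Γ → Yc) × Yc => p.1 0 + p.2) ⁻¹' {y}))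
          = {y - yh 0} := by
        intro yh; ext t
        simp only [mem_preimage, mem_singleton_iff]
        constructor
        · intro h; rw [← h]; abel
        · intro h; rw [h]; abel
      simp only [this, rho_singleton, lintegral_zero]
    simp [h1, Yc.volume_singleton y]
  · intro V hV hVne
    rw [marg_nuApprox]
    have hpos : 0 < volume V := hV.measure_pos volume hVne
    have : 0 < ((n : ℝ≥0∞) + 2)⁻¹ * volume V := by
      apply ENNReal.mul_pos _ hpos.ne'
      simp [ENNReal.inv_ne_zero, ENNReal.add_ne_top]
    refine this.trans_le ?_
    rw [Measure.add_apply, Measure.smul_apply, smul_eq_mul]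
    exact le_add_self

lemma exists_unif_nbhd (f : BoundedContinuousFunction (Γ → Yc) ℝ) {e : ℝ} (he : 0 < e) :
    ∃ N : Set Yc, IsOpen N ∧ (0:Yc) ∈ N ∧
      ∀ (x : Γ → Yc) (t : Yc), t ∈ N → dist (f x) (f (addConst (x, t))) ≤ e := by
  have huc : UniformContinuous f := CompactSpace.uniformContinuous_of_continuous f.continuous
  have hU : {p : (Γ → Yc) × (Γ → Yc) | dist (f p.1) (f p.2) < e} ∈ 𝓤 (Γ → Yc) :=
    huc (Metric.dist_mem_uniformity he)
  rw [uniformity_eq_comap_nhds_zero] at hU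
  obtain ⟨W, hW, hWsub⟩ := Filter.mem_comap.mp hU
  have hN : constMap ⁻¹' W ∈ 𝓝 (0 : Yc) :=
    (continuous_constMap (Γ := Γ)).continuousAt.preimage_mem_nhds hW
  obtain ⟨N, hNsub, hNopen, hN0⟩ := mem_nhds_iff.mp hN
  refine ⟨N, hNopen, hN0, fun x t ht => ?_⟩
  have hmem : (x, addConst (x,t)).2 - (x, addConst (x,t)).1 ∈ W := by
    have hc : addConst (x, t) - x = constMap t := by
      funext γ; show x γ + t - x γ = t; abel
    simpa [hc] using hNsub ht
  exact (hWsub hmem).le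

lemma integral_smoothed_close (μ : Measure (Γ → Yc)) [IsProbabilityMeasure μ]
    (f : BoundedContinuousFunction (Γ → Yc) ℝ) {e : ℝ} (he : 0 < e) :
    ∃ a > 0, ∀ δ : ℝ, 0 < δ → δ < a →
      dist (∫ x, f x ∂(Measure.map addConst (μ.prod (rho δ)))) (∫ x, f x ∂μ) ≤ e := by
  obtain ⟨N, hNopen, hN0, hNbound⟩ := exists_unif_nbhd f he
  obtain ⟨a, ha, haN⟩ := rho_ae_mem hNopen hN0
  refine ⟨a, ha, fun δ hδ hδa => ?_⟩
  haveI := rho_prob δ hδ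
  have h1 : ∫ x, f x ∂(Measure.map addConst (μ.prod (rho δ)))
      = ∫ p, f (addConst p) ∂(μ.prod (rho δ)) :=
    integral_map continuous_addConst.measurable.aemeasurable
      f.continuous.measurable.aestronglyMeasurable
  have h2 : ∫ x, f x ∂μ = ∫ p : (Γ → Yc) × Yc, f p.1 ∂(μ.prod (rho δ)) := by
    rw [← integral_map measurable_fst.aemeasurable f.continuous.measurable.aestronglyMeasurable,
      Measure.map_fst_prod, measure_univ, one_smul]
  rw [h1, h2, dist_eq_norm]
  have hi1 : Integrable (fun p : (Γ → Yc) × Yc => f (addConst p)) (μ.prod (rho δ)) :=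
    BoundedContinuousFunction.integrable _
      (f.compContinuous ⟨addConst, continuous_addConst⟩)
  have hi2 : Integrable (fun p : (Γ → Yc) × Yc => f p.1) (μ.prod (rho δ)) :=
    BoundedContinuousFunction.integrable _
      (f.compContinuous ⟨Prod.fst, continuous_fst⟩)
  rw [← integral_sub hi1 hi2]
  have hae : ∀ᵐ p ∂(μ.prod (rho δ)), ‖f (addConst p) - f p.1‖ ≤ e := by
    have hbad : (μ.prod (rho δ)) {p : (Γ → Yc) × Yc | p.2 ∉ N} = 0 := by
      have : {p : (Γ → Yc) × Yc | p.2 ∉ N} = univ ×ˢ Nᶜ := by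
        ext p
        simp only [mem_setOf_eq, Set.mem_prod, mem_univ, true_and, mem_compl_iff]
      rw [this, Measure.prod_prod]
      have h0 : rho δ Nᶜ = 0 := by
        have h := haN δ hδ hδa
        rwa [ae_iff] at h
      rw [h0, mul_zero]
    have : ∀ᵐ p ∂(μ.prod (rho δ)), p.2 ∈ N := by
      rw [ae_iff]; exact hbad
    filter_upwards [this] with p hp
    rw [← dist_eq_norm, dist_comm]
    exact hNbound p.1 p.2 hp
  calc ‖∫ p, (f (addConst p) - f p.1) ∂(μ.prod (rho δ))‖
      ≤ e * ((μ.prod (rho δ)) univ).toReal := norm_integral_le_of_norm_le_const hae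
    _ = e := by simp

def nuP (μ : ProbabilityMeasure (Γ → Yc)) (n : ℕ) : ProbabilityMeasure (Γ → Yc) :=
  ⟨nuApprox μ.toMeasure n, nuApprox_prob _ n⟩

lemma toReal_eps (n : ℕ) : (((n : ℝ≥0∞) + 2)⁻¹).toReal = ((n : ℝ) + 2)⁻¹ := by
  rw [ENNReal.toReal_inv, ENNReal.toReal_add (by simp) (by simp)]
  simp

lemma toReal_one_sub_eps (n : ℕ) :
    ((1 : ℝ≥0∞) - ((n : ℝ≥0∞) + 2)⁻¹).toReal = 1 - ((n : ℝ) + 2)⁻¹ := by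
  rw [ENNReal.toReal_sub_of_le (ENNReal.inv_le_one.mpr (le_add_self.trans' one_le_two))
    ENNReal.one_ne_top, toReal_eps]
  simp

lemma tendsto_eps : Tendsto (fun n : ℕ => ((n : ℝ) + 2)⁻¹) atTop (𝓝 0) :=
  tendsto_inv_atTop_zero.comp (tendsto_atTop_add_const_right atTop 2 tendsto_natCast_atTop_atTop)

lemma tendsto_nuP (μ : ProbabilityMeasure (Γ → Yc)) :
    Tendsto (fun n => nuP μ n) atTop (𝓝 μ) := by
  rw [ProbabilityMeasure.tendsto_iff_forall_integral_tendsto]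
  intro f
  set en : ℕ → ℝ := fun n => ((n : ℝ) + 2)⁻¹ with hen
  set In : ℕ → ℝ :=
    fun n => ∫ x, f x ∂(Measure.map addConst (μ.toMeasure.prod (rho ((n : ℝ) + 2)⁻¹))) with hIn
  set K : ℝ := ∫ x, f x ∂(constVol (Γ := Γ)) with hK
  set L : ℝ := ∫ x, f x ∂(μ.toMeasure) with hL
  have key : ∀ n, ∫ x, f x ∂((nuP μ n : Measure (Γ → Yc)))
      = (1 - en n) * In n + en n * K := by
    intro n
    haveI := rho_prob _ (delta_pos n)
    haveI : IsProbabilityMeasure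
        (Measure.map addConst (μ.toMeasure.prod (rho ((n : ℝ) + 2)⁻¹))) :=
      Measure.isProbabilityMeasure_map continuous_addConst.measurable.aemeasurable
    have h1 : Integrable f ((1 - ((n : ℝ≥0∞) + 2)⁻¹) •
        Measure.map addConst (μ.toMeasure.prod (rho ((n : ℝ) + 2)⁻¹))) :=
      (BoundedContinuousFunction.integrable _ f).smul_measure
        (ENNReal.sub_ne_top ENNReal.one_ne_top)
    have h2 : Integrable f (((n : ℝ≥0∞) + 2)⁻¹ • constVol (Γ := Γ)) :=
      (BoundedContinuousFunction.integrable _ f).smul_measure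
        (ENNReal.inv_ne_top.mpr (by simp))
    show ∫ x, f x ∂(nuApprox μ.toMeasure n) = _
    rw [nuApprox, integral_add_measure h1 h2, integral_smul_measure, integral_smul_measure,
      toReal_eps, toReal_one_sub_eps]
    simp [smul_eq_mul, hIn, hK, hen]
  simp only [key]
  have h_en : Tendsto en atTop (𝓝 0) := tendsto_eps
  have h_In : Tendsto In atTop (𝓝 L) := by
    rw [Metric.tendsto_atTop]
    intro ε hε
    obtain ⟨a, ha, hbound⟩ := integral_smoothed_close μ.toMeasure f (half_pos hε)
    have hev : ∀ᶠ n : ℕ in atTop, ((n : ℝ) + 2)⁻¹ < a := tendsto_eps.eventually (gt_mem_nhds ha)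
    obtain ⟨Nn, hNn⟩ := eventually_atTop.mp hev
    exact ⟨Nn, fun n hn =>
      (hbound _ (delta_pos n) (hNn n hn)).trans_lt (half_lt_self hε)⟩
  have : Tendsto (fun n => (1 - en n) * In n + en n * K) atTop
      (𝓝 ((1 - 0) * L + 0 * K)) :=
    (((tendsto_const_nhds.sub h_en).mul h_In)).add (h_en.mul tendsto_const_nhds)
  simpa using this

/-- rational points on the circle -/
def qpt (q : ℚ) : Yc := ((q : ℝ) : Yc)

lemma denseRange_qpt : DenseRange qpt := by
  have hsurj : Function.Surjective (fun x : ℝ => (x : Yc)) := Quotient.exists_rep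
  exact DenseRange.comp hsurj.denseRange Rat.denseRange_cast (AddCircle.continuous_mk' 1)

/-- tent function: positive exactly on `ball (qpt q) r`, bounded by 1 -/
def tent (q r : ℚ) : BoundedContinuousFunction Yc ℝ :=
  BoundedContinuousFunction.mkOfCompact
    ⟨fun x => max 0 (1 - dist x (qpt q) / r),
     continuous_const.max ((continuous_const.sub
       ((continuous_id.dist continuous_const).div_const r)))⟩

/-- trapezoid function: equal to 1 on `ball (qpt q) r`, vanishing outside `ball (qpt q) (2r)` -/
def trap (q r : ℚ) : BoundedContinuousFunction Yc ℝ :=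
  BoundedContinuousFunction.mkOfCompact
    ⟨fun x => min 1 (max 0 (2 - dist x (qpt q) / r)),
     continuous_const.min (continuous_const.max ((continuous_const.sub
       ((continuous_id.dist continuous_const).div_const r))))⟩

lemma tent_nonneg (q r : ℚ) (x : Yc) : 0 ≤ tent q r x := le_max_left _ _
lemma tent_le_one (q r : ℚ) (hr : 0 < r) {x : Yc} : tent q r x ≤ 1 := by
  have hr' : (0:ℝ) < r := by exact_mod_cast hr
  simp only [tent, BoundedContinuousFunction.mkOfCompact_apply, ContinuousMap.coe_mk]
  rcases le_or_gt (1 - dist x (qpt q) / (r:ℝ)) 0 with h | h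
  · simp [max_eq_left h]
  · rw [max_eq_right h.le]
    have : 0 ≤ dist x (qpt q) / (r:ℝ) := by positivity
    linarith
lemma tent_support (q r : ℚ) (hr : 0 < r) :
    Function.support (tent q r) = Metric.ball (qpt q) r := by
  ext x
  simp only [Function.mem_support, tent, BoundedContinuousFunction.mkOfCompact_apply,
    ContinuousMap.coe_mk, Metric.mem_ball]
  have hr' : (0:ℝ) < r := by exact_mod_cast hr
  constructor
  · intro h
    by_contra hc
    push_neg at hc
    have : 1 - dist x (qpt q) / r ≤ 0 := by
      rw [sub_nonpos, le_div_iff₀ hr']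
      linarith
    exact h (max_eq_left this)
  · intro h
    have : 0 < 1 - dist x (qpt q) / r := by
      rw [sub_pos, div_lt_one hr']
      exact h
    rw [max_eq_right this.le]
    exact this.ne'
lemma tent_nonpos_outside (q r : ℚ) (hr : 0 < r) {x : Yc} (hx : x ∉ Metric.ball (qpt q) r) :
    tent q r x ≤ 0 := by
  rcases (eq_or_ne (tent q r x) 0) with h | h
  · exact h.le
  · exact absurd ((tent_support q r hr) ▸ Function.mem_support.mpr h) hx

lemma trap_nonneg (q r : ℚ) (x : Yc) : 0 ≤ trap q r x := le_min zero_le_one (le_max_left _ _)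
lemma trap_le_one (q r : ℚ) (x : Yc) : trap q r x ≤ 1 := min_le_left _ _
lemma trap_eq_one (q r : ℚ) (hr : 0 < r) {x : Yc} (hx : x ∈ Metric.ball (qpt q) r) :
    trap q r x = 1 := by
  have hr' : (0:ℝ) < r := by exact_mod_cast hr
  rw [Metric.mem_ball] at hx
  have h2 : (1:ℝ) ≤ 2 - dist x (qpt q) / r := by
    have : dist x (qpt q) / r < 1 := (div_lt_one hr').mpr hx
    linarith
  simp only [trap, BoundedContinuousFunction.mkOfCompact_apply, ContinuousMap.coe_mk]
  rw [max_eq_right (by linarith : (0:ℝ) ≤ 2 - dist x (qpt q) / r), min_eq_left h2]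
lemma trap_nonpos_outside (q r : ℚ) (hr : 0 < r) {x : Yc}
    (hx : x ∉ Metric.ball (qpt q) (2 * r)) : trap q r x ≤ 0 := by
  have hr' : (0:ℝ) < r := by exact_mod_cast hr
  rw [Metric.mem_ball, not_lt] at hx
  have : 2 - dist x (qpt q) / r ≤ 0 := by
    rw [sub_nonpos, le_div_iff₀ hr']
    calc (2:ℝ) * r = 2 * r := rfl
    _ ≤ dist x (qpt q) := by exact_mod_cast hx
  simp only [trap, BoundedContinuousFunction.mkOfCompact_apply, ContinuousMap.coe_mk]
  rw [max_eq_left this]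
  exact min_le_right _ _

section circmeas
variable (ν : Measure Yc) [IsProbabilityMeasure ν]

lemma integral_tent_le (q r : ℚ) (hr : 0 < r) :
    ENNReal.ofReal (∫ y, tent q r y ∂ν) ≤ ν (Metric.ball (qpt q) r) :=
  integral_le_measure (fun x _ => tent_le_one q r hr) (fun x hx => tent_nonpos_outside q r hr hx)

lemma integral_tent_pos (hfull : ∀ V : Set Yc, IsOpen V → V.Nonempty → 0 < ν V)
    (q r : ℚ) (hr : 0 < r) : 0 < ∫ y, tent q r y ∂ν := by
  rw [integral_pos_iff_support_of_nonneg (tent_nonneg q r) (BoundedContinuousFunction.integrable ν _)]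
  rw [tent_support q r hr]
  exact hfull _ Metric.isOpen_ball ⟨qpt q, Metric.mem_ball_self (by exact_mod_cast hr)⟩

lemma full_support_of_tents (h : ∀ q r : ℚ, 0 < r → 0 < ∫ y, tent q r y ∂ν) :
    ∀ V : Set Yc, IsOpen V → V.Nonempty → 0 < ν V := by
  intro V hV ⟨y, hy⟩
  obtain ⟨s, hs, hball⟩ := Metric.isOpen_iff.mp hV y hy
  obtain ⟨q, hq⟩ := Metric.denseRange_iff.mp denseRange_qpt y (s/2) (by linarith)
  obtain ⟨r, hr0, hrs⟩ := exists_rat_btwn (show (0:ℝ) < s/2 by linarith)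
  have hr0' : (0:ℚ) < r := by exact_mod_cast hr0
  have hsub : Metric.ball (qpt q) r ⊆ V := by
    intro z hz
    apply hball
    rw [Metric.mem_ball] at hz ⊢
    calc dist z y ≤ dist z (qpt q) + dist (qpt q) y := dist_triangle _ _ _
      _ < r + s/2 := by rw [dist_comm (qpt q) y]; exact add_lt_add hz hq
      _ ≤ s := by linarith
  calc (0:ℝ≥0∞) < ENNReal.ofReal (∫ y, tent q r y ∂ν) := by
        rw [ENNReal.ofReal_pos]; exact h q r hr0'
    _ ≤ ν (Metric.ball (qpt q) r) := integral_tent_le ν q r hr0'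
    _ ≤ ν V := measure_mono hsub

lemma singleton_le_integral_trap (q r : ℚ) (hr : 0 < r) {y : Yc}
    (hy : y ∈ Metric.ball (qpt q) r) : (ν {y}).toReal ≤ ∫ x, trap q r x ∂ν := by
  have h1 : ∫ x, Set.indicator {y} (fun _ => (1:ℝ)) x ∂ν = (ν {y}).toReal := by
    rw [integral_indicator (MeasurableSet.singleton y)]
    simp
  rw [← h1]
  apply integral_mono ((integrable_const (1:ℝ)).indicator (MeasurableSet.singleton y))
    (BoundedContinuousFunction.integrable ν _)
  intro x
  rw [Set.indicator_apply]
  split_ifs with hx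
  · rw [mem_singleton_iff] at hx
    subst hx
    exact (trap_eq_one q r hr hy).ge
  · exact trap_nonneg q r x

lemma integral_trap_le_ball (q r : ℚ) (hr : 0 < r) :
    ENNReal.ofReal (∫ x, trap q r x ∂ν) ≤ ν (Metric.ball (qpt q) (2 * r)) :=
  integral_le_measure (fun x _ => trap_le_one q r x)
    (fun x hx => trap_nonpos_outside q r hr hx)

/-- goodness gives, for each `n`, a finite cover by balls with small trapezoid integrals. -/
lemma exists_cover_of_atomless (hatom : ∀ y : Yc, ν {y} = 0) (n : ℕ) :
    ∃ F : Finset (ℚ × ℚ), (∀ p ∈ F, 0 < p.2) ∧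
      (univ ⊆ ⋃ p ∈ F, Metric.ball (qpt p.1) (p.2 : ℝ)) ∧
      ∀ p ∈ F, ∫ x, trap p.1 p.2 x ∂ν < 1/(n+1) := by
  -- for each y, find a pair (q, r)
  have key : ∀ y : Yc, ∃ p : ℚ × ℚ, 0 < p.2 ∧ y ∈ Metric.ball (qpt p.1) (p.2 : ℝ) ∧
      ∫ x, trap p.1 p.2 x ∂ν < 1/(n+1) := by
    intro y
    -- continuity from above
    have htend : Tendsto (fun k : ℕ => ν (Metric.closedBall y (1/(k+1)))) atTop (𝓝 (ν {y})) := by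
      have hinter : ⋂ k : ℕ, Metric.closedBall y (1/((k:ℝ)+1)) = {y} := by
        apply Subset.antisymm
        · intro z hz
          simp only [mem_iInter, Metric.mem_closedBall] at hz
          have hle : dist z y ≤ 0 :=
            ge_of_tendsto' tendsto_one_div_add_atTop_nhds_zero_nat (fun k => hz k)
          simpa using dist_le_zero.mp hle
        · intro z hz
          simp only [mem_singleton_iff] at hz
          subst hz
          exact mem_iInter.mpr fun k => Metric.mem_closedBall_self (by positivity)
      have := tendsto_measure_iInter_atTop
        (μ := ν) (s := fun k : ℕ => Metric.closedBall y (1/((k:ℝ)+1)))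
        (fun k => Metric.isClosed_closedBall.measurableSet.nullMeasurableSet)
        (fun i j hij => Metric.closedBall_subset_closedBall (by
          apply one_div_le_one_div_of_le (by positivity)
          exact_mod_cast Nat.succ_le_succ hij))
        ⟨0, measure_ne_top ν _⟩
      rwa [hinter] at this
    rw [hatom y] at htend
    -- get k with small measure
    have hlt : ∀ᶠ k : ℕ in atTop, ν (Metric.closedBall y (1/(k+1))) < ENNReal.ofReal (1/(n+1)) :=
      htend.eventually_lt_const (by positivity)
    obtain ⟨k, hk⟩ := hlt.exists
    set ρ : ℝ := 1/((k:ℝ)+1) with hρ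
    have hρpos : 0 < ρ := by positivity
    obtain ⟨r, hr0, hrρ⟩ := exists_rat_btwn (show (0:ℝ) < ρ/3 by linarith)
    have hr0' : (0:ℚ) < r := by exact_mod_cast hr0
    obtain ⟨q, hq⟩ := Metric.denseRange_iff.mp denseRange_qpt y (r : ℝ) (by exact_mod_cast hr0)
    refine ⟨(q, r), hr0', by simpa [Metric.mem_ball] using hq, ?_⟩
    have hsub : Metric.ball (qpt q) (2 * (r:ℝ)) ⊆ Metric.closedBall y ρ := by
      intro z hz
      rw [Metric.mem_ball] at hz
      rw [Metric.mem_closedBall]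
      calc dist z y ≤ dist z (qpt q) + dist (qpt q) y := dist_triangle _ _ _
        _ ≤ 2 * (r:ℝ) + (r:ℝ) := by
            rw [dist_comm (qpt q) y]
            exact add_le_add hz.le hq.le
        _ ≤ ρ := by linarith
    have h1 : ∫ x, trap q r x ∂ν ≤ (ν (Metric.closedBall y ρ)).toReal := by
      rw [← ENNReal.ofReal_le_iff_le_toReal (measure_ne_top ν _)]
      exact (integral_trap_le_ball ν q r hr0').trans (measure_mono hsub)
    have h2 : (ν (Metric.closedBall y ρ)).toReal < 1/(n+1) := by
      have := ENNReal.toReal_strict_mono (by simp) hk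
      rwa [ENNReal.toReal_ofReal (by positivity)] at this
    push_cast at h1 h2 ⊢
    linarith
  choose c hc1 hc2 hc3 using key
  obtain ⟨t, ht⟩ := isCompact_univ.elim_finite_subcover
    (fun y : Yc => Metric.ball (qpt (c y).1) ((c y).2 : ℝ))
    (fun y => Metric.isOpen_ball) (fun y _ => mem_iUnion.mpr ⟨y, hc2 y⟩)
  refine ⟨t.image c, ?_, ?_, ?_⟩
  · intro p hp
    obtain ⟨y, _, rfl⟩ := Finset.mem_image.mp hp
    exact hc1 y
  · intro z hz
    obtain ⟨y, hy⟩ := mem_iUnion.mp (ht hz)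
    simp only [mem_iUnion, exists_prop] at hy ⊢
    exact ⟨c y, Finset.mem_image_of_mem c hy.1, hy.2⟩
  · intro p hp
    obtain ⟨y, _, rfl⟩ := Finset.mem_image.mp hp
    exact hc3 y

end circmeas

lemma atomless_of_covers (ν : Measure Yc) [IsProbabilityMeasure ν]
    (h : ∀ n : ℕ, ∃ F : Finset (ℚ × ℚ), (∀ p ∈ F, 0 < p.2) ∧
      (univ ⊆ ⋃ p ∈ F, Metric.ball (qpt p.1) (p.2 : ℝ)) ∧
      ∀ p ∈ F, ∫ x, trap p.1 p.2 x ∂ν < 1/(n+1)) :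
    ∀ y : Yc, ν {y} = 0 := by
  intro y
  have hbound : ∀ n : ℕ, (ν {y}).toReal ≤ 1/((n:ℝ)+1) := by
    intro n
    obtain ⟨F, hFpos, hFcov, hFsmall⟩ := h n
    obtain ⟨p, hpF, hyp⟩ : ∃ p ∈ F, y ∈ Metric.ball (qpt p.1) (p.2 : ℝ) := by
      have := hFcov (mem_univ y)
      simpa using this
    exact (singleton_le_integral_trap ν p.1 p.2 (hFpos p hpF) hyp).trans
      (hFsmall p hpF).le
  have h0 : (ν {y}).toReal ≤ 0 :=
    ge_of_tendsto' tendsto_one_div_add_atTop_nhds_zero_nat hbound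
  have := le_antisymm h0 ENNReal.toReal_nonneg
  rw [ENNReal.toReal_eq_zero_iff] at this
  exact this.resolve_right (measure_ne_top ν _)

section assembly
variable {Γ : Type*} [AddGroup Γ] [Countable Γ]

instance margProb (μ : ProbabilityMeasure (Γ → Yc)) : IsProbabilityMeasure (Marg μ) :=
  Measure.isProbabilityMeasure_map measurable_ev0.aemeasurable

lemma marg_integral (μ : ProbabilityMeasure (Γ → Yc)) (g : BoundedContinuousFunction Yc ℝ) :
    ∫ y, g y ∂(Marg μ) = ∫ x, g (x 0) ∂(μ : Measure (Γ → Yc)) :=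
  integral_map measurable_ev0.aemeasurable g.continuous.measurable.aestronglyMeasurable

lemma continuous_margIntegral (g : BoundedContinuousFunction Yc ℝ) :
    Continuous (fun μ : {μ : ProbabilityMeasure (Γ → Yc) // IsSim μ} =>
      ∫ y, g y ∂(Marg μ.1)) := by
  have heq : (fun μ : {μ : ProbabilityMeasure (Γ → Yc) // IsSim μ} => ∫ y, g y ∂(Marg μ.1))
      = fun μ : {μ : ProbabilityMeasure (Γ → Yc) // IsSim μ} =>
          ∫ x, (g.compContinuous ⟨fun x : Γ → Yc => x 0, continuous_apply 0⟩) x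
            ∂(μ.1 : Measure (Γ → Yc)) := by
    funext μ
    exact marg_integral μ.1 g
  rw [heq]
  exact (ProbabilityMeasure.continuous_integral_boundedContinuousFunction _).comp
    continuous_subtype_val

def suppSet (q r : ℚ) : Set {μ : ProbabilityMeasure (Γ → Yc) // IsSim μ} :=
  {μ | 0 < ∫ y, tent q r y ∂(Marg μ.1)}

def atomSet (n : ℕ) : Set {μ : ProbabilityMeasure (Γ → Yc) // IsSim μ} :=
  ⋃ (F : Finset (ℚ × ℚ)) (_ : ∀ p ∈ F, 0 < p.2)
    (_ : univ ⊆ ⋃ p ∈ F, Metric.ball (qpt p.1) (p.2 : ℝ)),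
    ⋂ p ∈ F, {μ | ∫ x, trap p.1 p.2 x ∂(Marg μ.1) < 1/(n+1)}

lemma isOpen_suppSet (q r : ℚ) : IsOpen (suppSet (Γ := Γ) q r) :=
  isOpen_lt continuous_const (continuous_margIntegral _)

lemma isOpen_atomSet (n : ℕ) : IsOpen (atomSet (Γ := Γ) n) := by
  refine isOpen_iUnion fun F => isOpen_iUnion fun _ => isOpen_iUnion fun _ => ?_
  exact isOpen_biInter_finset fun p _ => isOpen_lt (continuous_margIntegral _) continuous_const

lemma mem_atomSet {n : ℕ} {μ : {μ : ProbabilityMeasure (Γ → Yc) // IsSim μ}} :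
    μ ∈ atomSet n ↔ ∃ F : Finset (ℚ × ℚ), (∀ p ∈ F, 0 < p.2) ∧
      (univ ⊆ ⋃ p ∈ F, Metric.ball (qpt p.1) (p.2 : ℝ)) ∧
      ∀ p ∈ F, ∫ x, trap p.1 p.2 x ∂(Marg μ.1) < 1/(n+1) := by
  simp only [atomSet, mem_iUnion, mem_iInter, mem_setOf_eq]
  constructor
  · rintro ⟨F, h1, h2, h3⟩
    exact ⟨F, h1, h2, h3⟩
  · rintro ⟨F, h1, h2, h3⟩
    exact ⟨F, h1, h2, h3⟩

lemma dense_good :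
    Dense {μ : {μ : ProbabilityMeasure (Γ → Yc) // IsSim μ} | IsGoodMeasure (Marg μ.1)} := by
  intro μ
  set seq : ℕ → {μ : ProbabilityMeasure (Γ → Yc) // IsSim μ} :=
    fun n => ⟨nuP μ.1 n, fun β => nuApprox_shift_invariant (μ.1 : Measure (Γ → Yc)) μ.2 n β⟩
    with hseq
  apply mem_closure_of_tendsto (f := seq) (b := atTop)
  · exact tendsto_subtype_rng.mpr (tendsto_nuP μ.1)
  · filter_upwards with n
    exact ⟨(marg_nuApprox_good (μ.1 : Measure (Γ → Yc)) n).1,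
      (marg_nuApprox_good (μ.1 : Measure (Γ → Yc)) n).2⟩

lemma dense_suppSet (q r : ℚ) (hr : 0 < r) : Dense (suppSet (Γ := Γ) q r) := by
  apply dense_good.mono
  intro μ hμ
  exact integral_tent_pos (Marg μ.1) hμ.2 q r hr

lemma dense_atomSet (n : ℕ) : Dense (atomSet (Γ := Γ) n) := by
  apply dense_good.mono
  intro μ hμ
  exact mem_atomSet.mpr (exists_cover_of_atomless (Marg μ.1) hμ.1 n)

end assembly

end Yhat

end Aux

/-- In the space `•SIM` of shift-invariant Borel probability measures on `Ŷ = Y^Γ`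
(with the weak-* topology), the good sims — those whose one-dimensional marginal is
nonatomic with full support — form a comeager subset. -/
theorem good_sims_comeager {Γ : Type*} [AddGroup Γ] [Countable Γ] :
    {μhat : {μ : ProbabilityMeasure (Γ → AddCircle (1 : ℝ)) // IsSim μ} |
        IsGoodMeasure (Marg μhat.1)} ∈
      residual {μ : ProbabilityMeasure (Γ → AddCircle (1 : ℝ)) // IsSim μ} := by
  haveI : Fact ((0:ℝ) < 1) := ⟨one_pos⟩
  have h1 : ∀ p : ℚ × ℚ,
      (if 0 < p.2 then suppSet (Γ := Γ) p.1 p.2 else univ) ∈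
        residual {μ : ProbabilityMeasure (Γ → Yc) // IsSim μ} := by
    intro p
    split_ifs with h
    · exact residual_of_dense_open (isOpen_suppSet p.1 p.2) (dense_suppSet p.1 p.2 h)
    · exact univ_mem
  have h2 : ∀ n : ℕ, atomSet (Γ := Γ) n ∈
      residual {μ : ProbabilityMeasure (Γ → Yc) // IsSim μ} := fun n =>
    residual_of_dense_open (isOpen_atomSet n) (dense_atomSet n)
  have hI1 : (⋂ p : ℚ × ℚ, if 0 < p.2 then suppSet (Γ := Γ) p.1 p.2 else univ) ∈
      residual {μ : ProbabilityMeasure (Γ → Yc) // IsSim μ} := countable_iInter_mem.mpr h1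
  have hI2 : (⋂ n : ℕ, atomSet (Γ := Γ) n) ∈
      residual {μ : ProbabilityMeasure (Γ → Yc) // IsSim μ} := countable_iInter_mem.mpr h2
  refine mem_of_superset (inter_mem hI1 hI2) ?_
  rintro μ ⟨hs, ha⟩
  rw [mem_iInter] at hs ha
  constructor
  · -- nonatomic
    apply atomless_of_covers (Marg μ.1)
    intro n
    exact mem_atomSet.mp (ha n)
  · -- full support
    apply full_support_of_tents (Marg μ.1)
    intro q r hr
    have := hs (q, r)
    rw [if_pos hr] at this
    exact this
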